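/- If there is an injective F_sigma-map from a Polish space X into ω × Y (for Y Polish), then there is also an injective Δ⁰₂-map from X into ω × Y. Here an F_sigma-map is a function such that images and preimages of F_sigma sets are F_sigma, and a Δ⁰₂-map is one such that images and preimages of sets that are both F_sigma and G_delta are again both F_sigma and G_delta. -/

import Mathlib

/-- A set is F_sigma if it is a countable union of closed sets. -/
def IsFsigma {X : Type*} [TopologicalSpace X] (s : Set X) : Prop :=
  ∃ F : ℕ → Set X, (∀ n, IsClosed (F n)) ∧ s = ⋃ n, F n

/-- A Δ⁰₂ set is one that is both F_sigma and G_delta. -/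
def IsDelta02 {X : Type*} [TopologicalSpace X] (s : Set X) : Prop :=
  IsFsigma s ∧ IsGδ s

set_option linter.unusedSectionVars false

section Aux

variable {X Y : Type*} [TopologicalSpace X] [TopologicalSpace Y]

lemma IsClosed.isFsigma {s : Set X} (h : IsClosed s) : IsFsigma s :=
  ⟨fun _ => s, fun _ => h, (Set.iUnion_const s).symm⟩

lemma isFsigma_empty : IsFsigma (∅ : Set X) := isClosed_empty.isFsigma

lemma IsFsigma.iUnion {s : ℕ → Set X} (h : ∀ n, IsFsigma (s n)) :
    IsFsigma (⋃ n, s n) := by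
  choose F hFc hFe using h
  refine ⟨fun k => F k.unpair.1 k.unpair.2, fun k => hFc _ _, ?_⟩
  ext x
  simp only [Set.mem_iUnion]
  constructor
  · rintro ⟨n, hn⟩
    rw [hFe n] at hn
    obtain ⟨m, hm⟩ := Set.mem_iUnion.1 hn
    exact ⟨Nat.pair n m, by simp [Nat.unpair_pair]; exact hm⟩
  · rintro ⟨k, hk⟩
    exact ⟨k.unpair.1, (hFe _).symm ▸ Set.mem_iUnion.2 ⟨k.unpair.2, hk⟩⟩

lemma IsFsigma.union {s t : Set X} (hs : IsFsigma s) (ht : IsFsigma t) :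
    IsFsigma (s ∪ t) := by
  obtain ⟨F, hFc, rfl⟩ := hs
  obtain ⟨G, hGc, rfl⟩ := ht
  refine ⟨fun n => F n ∪ G n, fun n => (hFc n).union (hGc n), ?_⟩
  ext x
  simp only [Set.mem_union, Set.mem_iUnion]
  constructor
  · rintro (⟨n, h⟩ | ⟨n, h⟩) <;> exact ⟨n, by tauto⟩
  · rintro ⟨n, h | h⟩
    exacts [Or.inl ⟨n, h⟩, Or.inr ⟨n, h⟩]

lemma IsFsigma.inter {s t : Set X} (hs : IsFsigma s) (ht : IsFsigma t) :
    IsFsigma (s ∩ t) := by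
  obtain ⟨F, hFc, rfl⟩ := hs
  obtain ⟨G, hGc, rfl⟩ := ht
  refine ⟨fun k => F k.unpair.1 ∩ G k.unpair.2, fun k => (hFc _).inter (hGc _), ?_⟩
  ext x
  simp only [Set.mem_iUnion, Set.mem_inter_iff]
  constructor
  · rintro ⟨⟨n, hn⟩, ⟨m, hm⟩⟩
    exact ⟨Nat.pair n m, by simpa [Nat.unpair_pair] using And.intro hn hm⟩
  · rintro ⟨k, h1, h2⟩
    exact ⟨⟨k.unpair.1, h1⟩, ⟨k.unpair.2, h2⟩⟩

lemma IsFsigma.preimage {f : X → Y} (hf : Continuous f) {s : Set Y}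
    (hs : IsFsigma s) : IsFsigma (f ⁻¹' s) := by
  obtain ⟨F, hFc, rfl⟩ := hs
  exact ⟨fun n => f ⁻¹' F n, fun n => (hFc n).preimage hf, by rw [Set.preimage_iUnion]⟩

lemma isGδ_iff_compl_isFsigma {s : Set X} : IsGδ s ↔ IsFsigma sᶜ := by
  rw [isGδ_iff_eq_iInter_nat]
  constructor
  · rintro ⟨f, hf, rfl⟩
    exact ⟨fun n => (f n)ᶜ, fun n => (hf n).isClosed_compl, by rw [Set.compl_iInter]⟩
  · rintro ⟨F, hFc, hFe⟩
    exact ⟨fun n => (F n)ᶜ, fun n => (hFc n).isOpen_compl,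
      by rw [← Set.compl_iUnion, ← hFe, compl_compl]⟩

lemma IsOpen.isFsigma [PolishSpace X] {s : Set X} (h : IsOpen s) : IsFsigma s := by
  letI := TopologicalSpace.upgradeIsCompletelyMetrizable X
  rw [← compl_compl s]
  exact isGδ_iff_compl_isFsigma.1 h.isClosed_compl.isGδ

example : True := trivial

lemma isFsigma_image_mk {k : ℕ} {s : Set Y} (hs : IsFsigma s) :
    IsFsigma (Prod.mk k '' s) := by
  obtain ⟨F, hFc, rfl⟩ := hs
  rw [Set.image_iUnion]
  refine IsFsigma.iUnion fun n => ?_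
  have : Prod.mk k '' F n = {k} ×ˢ F n := (Set.singleton_prod).symm
  rw [this]
  exact (isClosed_singleton.prod (hFc n)).isFsigma

lemma isFsigma_image_snd {s : Set (ℕ × Y)} (hs : IsFsigma s) :
    IsFsigma (Prod.snd '' s) := by
  obtain ⟨F, hFc, rfl⟩ := hs
  rw [Set.image_iUnion]
  refine IsFsigma.iUnion fun n => ?_
  have : Prod.snd '' F n = ⋃ m : ℕ, (Prod.mk m) ⁻¹' (F n) := by
    ext y
    simp only [Set.mem_image, Set.mem_iUnion, Set.mem_preimage]
    constructor
    · rintro ⟨⟨m, y'⟩, h, rfl⟩; exact ⟨m, h⟩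
    · rintro ⟨m, h⟩; exact ⟨(m, y), h, rfl⟩
  rw [this]
  exact IsFsigma.iUnion fun m => ((hFc n).preimage (Continuous.prodMk_right m)).isFsigma

lemma image_compl_of_injective {Z : Type*} {g : X → Z} (hg : Function.Injective g)
    (B : Set X) : (g '' B)ᶜ = g '' Bᶜ ∪ (Set.range g)ᶜ := by
  ext p
  simp only [Set.mem_compl_iff, Set.mem_union, Set.mem_image, Set.mem_range]
  constructor
  · intro h
    by_cases hr : ∃ x, g x = p
    · obtain ⟨x, rfl⟩ := hr
      exact Or.inl ⟨x, fun hx => h ⟨x, hx, rfl⟩, rfl⟩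
    · exact Or.inr hr
  · rintro (⟨x, hx, rfl⟩ | hr) ⟨x', hx', he⟩
    · exact hx (hg he ▸ hx')
    · exact hr ⟨x', he⟩

end Aux

theorem stmt0 {X Y : Type*} [TopologicalSpace X] [PolishSpace X]
    [TopologicalSpace Y] [PolishSpace Y]
    (f : X → ℕ × Y) (hinj : Function.Injective f)
    (hpre : ∀ A : Set (ℕ × Y), IsFsigma A → IsFsigma (f ⁻¹' A))
    (himg : ∀ B : Set X, IsFsigma B → IsFsigma (f '' B)) :
    ∃ g : X → ℕ × Y, Function.Injective g ∧
      (∀ A : Set (ℕ × Y), IsDelta02 A → IsDelta02 (g ⁻¹' A)) ∧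
      (∀ B : Set X, IsDelta02 B → IsDelta02 (g '' B)) := by
  classical
  obtain ⟨F, hFc, hFr⟩ : IsFsigma (Set.range f) := by
    simpa [Set.image_univ] using himg Set.univ isClosed_univ.isFsigma
  have hmem : ∀ x, ∃ n, f x ∈ F n := fun x =>
    Set.mem_iUnion.1 (hFr ▸ Set.mem_range_self x)
  set N : X → ℕ := fun x => Nat.find (hmem x) with hN
  set P : ℕ → ℕ → Set (ℕ × Y) := fun m n =>
    ((Prod.fst ⁻¹' {m}) ∩ F n) ∩ (⋂ k ∈ Finset.range n, (F k)ᶜ) with hPdef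
  set c : ℕ → ℕ → (ℕ × Y) → (ℕ × Y) := fun m n p => (Nat.pair m n, p.2) with hc
  set S : ℕ → ℕ → Set Y := fun m n => Prod.mk m ⁻¹' (P m n) with hS
  set g : X → ℕ × Y := fun x => (Nat.pair (f x).1 (N x), (f x).2) with hg
  have hPmem : ∀ (p : ℕ × Y) m n,
      p ∈ P m n ↔ p.1 = m ∧ p ∈ F n ∧ ∀ k < n, p ∉ F k := by
    intro p m n
    simp only [hPdef, Set.mem_inter_iff, Set.mem_preimage, Set.mem_singleton_iff,
      Set.mem_iInter, Finset.mem_range, Set.mem_compl_iff]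
    tauto
  have hfP : ∀ x, f x ∈ P (f x).1 (N x) := fun x =>
    (hPmem _ _ _).2 ⟨rfl, Nat.find_spec (hmem x), fun k hk => Nat.find_min (hmem x) hk⟩
  have huniq : ∀ x m n, f x ∈ P m n → m = (f x).1 ∧ n = N x := by
    intro x m n hp
    obtain ⟨h1, h2, h3⟩ := (hPmem _ _ _).1 hp
    refine ⟨h1.symm, ?_⟩
    have hle : N x ≤ n := Nat.find_min' (hmem x) h2
    rcases lt_or_eq_of_le hle with h | h
    · exact absurd (Nat.find_spec (hmem x)) (h3 _ h)
    · exact h.symm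
  have hgc : ∀ x m n, f x ∈ P m n → g x = c m n (f x) := by
    intro x m n hp
    obtain ⟨hm, hn⟩ := huniq x m n hp
    simp only [hg, hc, hm, hn]
  have hPF : ∀ m n, IsFsigma (P m n) := by
    intro m n
    refine IsFsigma.inter (IsFsigma.inter ?_ (hFc n).isFsigma) ?_
    · exact (isClosed_singleton.preimage continuous_fst).isFsigma
    · exact (isOpen_biInter_finset fun k _ => (hFc k).isOpen_compl).isFsigma
  have hcc : ∀ m n, Continuous (c m n) := fun m n =>
    continuous_const.prodMk continuous_snd
  have hcimg : ∀ m n (s : Set (ℕ × Y)), IsFsigma s → IsFsigma (c m n '' s) := by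
    intro m n s hs
    have : c m n '' s = Prod.mk (Nat.pair m n) '' (Prod.snd '' s) := by
      rw [Set.image_image]
    rw [this]
    exact isFsigma_image_mk (isFsigma_image_snd hs)
  have hpreim : ∀ A : Set (ℕ × Y), g ⁻¹' A =
      f ⁻¹' (⋃ k : ℕ, P k.unpair.1 k.unpair.2 ∩ c k.unpair.1 k.unpair.2 ⁻¹' A) := by
    intro A
    ext x
    simp only [Set.mem_preimage, Set.mem_iUnion, Set.mem_inter_iff]
    constructor
    · intro h
      refine ⟨Nat.pair (f x).1 (N x), ?_⟩
      simp only [Nat.unpair_pair]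
      exact ⟨hfP x, hgc x _ _ (hfP x) ▸ h⟩
    · rintro ⟨k, hP', hA⟩
      rw [hgc x _ _ hP']
      exact hA
  have hgpre : ∀ A, IsFsigma A → IsFsigma (g ⁻¹' A) := by
    intro A hA
    rw [hpreim A]
    exact hpre _ (IsFsigma.iUnion fun k => (hPF _ _).inter (hA.preimage (hcc _ _)))
  have himclaim : ∀ B : Set X, g '' B =
      ⋃ k : ℕ, c k.unpair.1 k.unpair.2 '' (f '' B ∩ P k.unpair.1 k.unpair.2) := by
    intro B
    ext p
    constructor
    · rintro ⟨x, hx, rfl⟩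
      refine Set.mem_iUnion.2 ⟨Nat.pair (f x).1 (N x), ?_⟩
      simp only [Nat.unpair_pair]
      exact ⟨f x, ⟨⟨x, hx, rfl⟩, hfP x⟩, (hgc x _ _ (hfP x)).symm⟩
    · intro hp
      obtain ⟨k, q, ⟨⟨x, hx, rfl⟩, hq2⟩, rfl⟩ := Set.mem_iUnion.1 hp
      exact ⟨x, hx, hgc x _ _ hq2⟩
  have hgimg : ∀ B, IsFsigma B → IsFsigma (g '' B) := by
    intro B hB
    rw [himclaim]
    exact IsFsigma.iUnion fun k => hcimg _ _ _ ((himg B hB).inter (hPF _ _))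
  have hginj : Function.Injective g := by
    intro a b hab
    have h2 : (g a).1 = (g b).1 := congrArg Prod.fst hab
    have h3 : (f a).1 = (f b).1 := by
      have := congrArg (fun k => k.unpair.1) h2
      simpa only [hg, Nat.unpair_pair] using this
    have h1 : (f a).2 = (f b).2 := by
      have := congrArg Prod.snd hab
      simpa only [hg] using this
    exact hinj (Prod.ext h3 h1)
  have hrange : (Set.range g)ᶜ = ⋃ k : ℕ, Prod.mk k '' (S k.unpair.1 k.unpair.2)ᶜ := by
    ext p
    simp only [Set.mem_compl_iff, Set.mem_range, Set.mem_iUnion, Set.mem_image,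
      Set.mem_compl_iff]
    constructor
    · intro h
      refine ⟨p.1, p.2, ?_, rfl⟩
      intro hs
      rw [hS, Set.mem_preimage] at hs
      have hrf : (p.1.unpair.1, p.2) ∈ Set.range f :=
        hFr ▸ Set.mem_iUnion.2 ⟨p.1.unpair.2, ((hPmem _ _ _).1 hs).2.1⟩
      obtain ⟨x, hx⟩ := hrf
      have hxP : f x ∈ P p.1.unpair.1 p.1.unpair.2 := hx.symm ▸ hs
      obtain ⟨hm, hn⟩ := huniq x _ _ hxP
      refine h ⟨x, ?_⟩
      have hsnd : (f x).2 = p.2 := by rw [hx]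
      have hfst : Nat.pair (f x).1 (N x) = p.1 := by
        rw [← hm, ← hn, Nat.pair_unpair]
      exact Prod.ext hfst hsnd
    · rintro ⟨k, y, hy, heq⟩ ⟨x, hx⟩
      apply hy
      have hgk : g x = (k, y) := hx.trans heq.symm
      have h1 : Nat.pair (f x).1 (N x) = k := congrArg Prod.fst hgk
      have h2 : (f x).2 = y := congrArg Prod.snd hgk
      have hu1 : k.unpair.1 = (f x).1 := by rw [← h1, Nat.unpair_pair]
      have hu2 : k.unpair.2 = N x := by rw [← h1, Nat.unpair_pair]
      rw [hu1, hu2, hS, Set.mem_preimage, ← h2]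
      exact hfP x
  have hScompl : ∀ m n, IsFsigma (S m n)ᶜ := by
    intro m n
    have hA : IsClosed (Prod.mk m ⁻¹' ((Prod.fst ⁻¹' {m}) ∩ F n)) :=
      ((isClosed_singleton.preimage continuous_fst).inter (hFc n)).preimage
        (Continuous.prodMk_right m)
    have hB : IsOpen (Prod.mk m ⁻¹' (⋂ k ∈ Finset.range n, (F k)ᶜ)) :=
      (isOpen_biInter_finset fun k _ => (hFc k).isOpen_compl).preimage
        (Continuous.prodMk_right m)
    have hSeq : S m n = Prod.mk m ⁻¹' ((Prod.fst ⁻¹' {m}) ∩ F n) ∩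
        Prod.mk m ⁻¹' (⋂ k ∈ Finset.range n, (F k)ᶜ) := by
      simp only [hS, hPdef, Set.preimage_inter]
    rw [hSeq, Set.compl_inter]
    exact hA.isOpen_compl.isFsigma.union hB.isClosed_compl.isFsigma
  refine ⟨g, hginj, ?_, ?_⟩
  · rintro A ⟨hA1, hA2⟩
    refine ⟨hgpre A hA1, isGδ_iff_compl_isFsigma.2 ?_⟩
    rw [← Set.preimage_compl]
    exact hgpre Aᶜ (isGδ_iff_compl_isFsigma.1 hA2)
  · rintro B ⟨hB1, hB2⟩
    refine ⟨hgimg B hB1, isGδ_iff_compl_isFsigma.2 ?_⟩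
    rw [image_compl_of_injective hginj B]
    refine (hgimg Bᶜ (isGδ_iff_compl_isFsigma.1 hB2)).union ?_
    rw [hrange]
    exact IsFsigma.iUnion fun k => isFsigma_image_mk (hScompl _ _)
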